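/- Let w ∈ ℂ and let Ω ⊆ ℂ be a measurable set with finite Lebesgue measure |Ω|. Then ∫_Ω e^{−π|z−w|²} dA(z) ≤ 1 − e^{−|Ω|}. (Equivalently, ∫_Ω |k_w(z)|² dλ(z) ≤ 1 − e^{−|Ω|}, where k_w(z) = e^{π w̄ z − (π/2)|w|²} is the normalized reproducing kernel of the Bargmann–Fock space.) -/

import Mathlib

open MeasureTheory Set Real

/-- The one-dimensional radial integral. -/
lemma radial_integral (r : ℝ) (hr : 0 ≤ r) :
    ∫ x in Set.Ioo (0 : ℝ) r, x * Real.exp (-Real.pi * x ^ 2)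
      = (1 - Real.exp (-Real.pi * r ^ 2)) / (2 * Real.pi) := by
  have hπ : (0 : ℝ) < Real.pi := Real.pi_pos
  have hderiv : ∀ x ∈ Set.uIcc (0 : ℝ) r,
      HasDerivAt (fun x : ℝ => -(2 * Real.pi)⁻¹ * Real.exp (-Real.pi * x ^ 2))
        (x * Real.exp (-Real.pi * x ^ 2)) x := by
    intro x _
    have h1 : HasDerivAt (fun x : ℝ => -Real.pi * x ^ 2) (-Real.pi * (2 * x)) x := by
      simpa using (hasDerivAt_pow 2 x).const_mul (-Real.pi)
    have h2 := h1.exp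
    have h3 := h2.const_mul (-(2 * Real.pi)⁻¹)
    convert h3 using 1
    · rfl
    · rfl
    field_simp
  have hcont : IntervalIntegrable (fun x : ℝ => x * Real.exp (-Real.pi * x ^ 2))
      volume 0 r := (by continuity : Continuous
        (fun x : ℝ => x * Real.exp (-Real.pi * x ^ 2))).intervalIntegrable 0 r
  have := intervalIntegral.integral_eq_sub_of_hasDerivAt hderiv hcont
  rw [intervalIntegral.integral_of_le hr, MeasureTheory.integral_Ioc_eq_integral_Ioo] at this
  rw [this]
  have : Real.exp (-Real.pi * 0 ^ 2) = 1 := by norm_num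
  rw [this]
  field_simp
  ring

/-- Gaussian integral over a ball centered at the Gaussian center. -/
lemma gaussian_ball_integral (w : ℂ) (r : ℝ) (hr : 0 ≤ r) :
    ∫ z in Metric.ball w r, Real.exp (-Real.pi * ‖z - w‖ ^ 2)
      = 1 - Real.exp (-Real.pi * r ^ 2) := by
  have hπ : (0 : ℝ) < Real.pi := Real.pi_pos
  -- translate to ball centered at 0
  have htrans : ∫ z in Metric.ball w r, Real.exp (-Real.pi * ‖z - w‖ ^ 2)
      = ∫ z in Metric.ball (0 : ℂ) r, Real.exp (-Real.pi * ‖z‖ ^ 2) := by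
    have hmp : MeasurePreserving (fun z : ℂ => z + w) volume volume :=
      measurePreserving_add_right volume w
    have hemb : MeasurableEmbedding (fun z : ℂ => z + w) :=
      (MeasurableEquiv.addRight w).measurableEmbedding
    have himg : (fun z : ℂ => z + w) '' Metric.ball (0 : ℂ) r = Metric.ball w r := by
      ext z
      simp only [Set.mem_image, Metric.mem_ball, dist_eq_norm]
      constructor
      · rintro ⟨y, hy, rfl⟩; simpa using hy
      · intro hz; exact ⟨z - w, by simpa using hz, by ring⟩
    rw [← himg, hmp.setIntegral_image_emb hemb]
    simp
  rw [htrans]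
  -- write as a full-space integral of an indicator
  have hind : ∫ z in Metric.ball (0 : ℂ) r, Real.exp (-Real.pi * ‖z‖ ^ 2)
      = ∫ z : ℂ, (Metric.ball (0 : ℂ) r).indicator
          (fun z => Real.exp (-Real.pi * ‖z‖ ^ 2)) z := by
    rw [MeasureTheory.integral_indicator Metric.isOpen_ball.measurableSet]
  rw [hind, ← Complex.integral_comp_polarCoord_symm, polarCoord_target]
  have hstep : ∫ p in Set.Ioi (0 : ℝ) ×ˢ Set.Ioo (-Real.pi) Real.pi,
        p.1 • (Metric.ball (0 : ℂ) r).indicator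
          (fun z => Real.exp (-Real.pi * ‖z‖ ^ 2)) (Complex.polarCoord.symm p)
      = ∫ p in Set.Ioo (0 : ℝ) r ×ˢ Set.Ioo (-Real.pi) Real.pi,
          p.1 * Real.exp (-Real.pi * p.1 ^ 2) := by
    have h1 : ∫ p in Set.Ioi (0 : ℝ) ×ˢ Set.Ioo (-Real.pi) Real.pi,
        p.1 • (Metric.ball (0 : ℂ) r).indicator
          (fun z => Real.exp (-Real.pi * ‖z‖ ^ 2)) (Complex.polarCoord.symm p)
        = ∫ p in Set.Ioi (0 : ℝ) ×ˢ Set.Ioo (-Real.pi) Real.pi,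
            ({p : ℝ × ℝ | p.1 < r}).indicator
              (fun p => p.1 * Real.exp (-Real.pi * p.1 ^ 2)) p := by
      apply MeasureTheory.setIntegral_congr_fun
        ((measurableSet_Ioi.prod measurableSet_Ioo))
      intro p hp
      obtain ⟨hp1, hp2⟩ := hp
      have habs : ‖Complex.polarCoord.symm p‖ = p.1 := by
        rw [Complex.norm_polarCoord_symm,
          abs_of_pos (Set.mem_Ioi.mp hp1)]
      by_cases hlt : p.1 < r
      · have hmem : Complex.polarCoord.symm p ∈ Metric.ball (0 : ℂ) r := by
          simp only [Metric.mem_ball, dist_zero_right]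
          rw [habs]; exact hlt
        rw [Set.indicator_of_mem (show p ∈ {q : ℝ × ℝ | q.1 < r} from hlt)]
        simp only [Set.indicator_of_mem hmem, smul_eq_mul, habs]
      · have hmem : Complex.polarCoord.symm p ∉ Metric.ball (0 : ℂ) r := by
          simp only [Metric.mem_ball, dist_zero_right]
          rw [habs]; exact hlt
        rw [Set.indicator_of_notMem (show p ∉ {q : ℝ × ℝ | q.1 < r} from hlt)]
        simp only [Set.indicator_of_notMem hmem, smul_eq_mul, mul_zero]
    have hset : (Set.Ioi (0 : ℝ) ×ˢ Set.Ioo (-Real.pi) Real.pi)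
        ∩ {p : ℝ × ℝ | p.1 < r} = Set.Ioo (0 : ℝ) r ×ˢ Set.Ioo (-Real.pi) Real.pi := by
      ext p
      simp only [Set.mem_inter_iff, Set.mem_prod, Set.mem_Ioi, Set.mem_Ioo,
        Set.mem_setOf_eq]
      tauto
    rw [h1, MeasureTheory.setIntegral_indicator (measurableSet_lt measurable_fst
      measurable_const), hset]
  rw [hstep]
  have hfub : ∫ p in Set.Ioo (0 : ℝ) r ×ˢ Set.Ioo (-Real.pi) Real.pi,
        p.1 * Real.exp (-Real.pi * p.1 ^ 2)
      = (∫ x in Set.Ioo (0 : ℝ) r, x * Real.exp (-Real.pi * x ^ 2))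
          * ∫ _ in Set.Ioo (-Real.pi) Real.pi, (1 : ℝ) := by
    rw [← MeasureTheory.setIntegral_prod_mul, MeasureTheory.Measure.volume_eq_prod]
    simp_rw [mul_one]
  rw [hfub, radial_integral r hr]
  have hIoo : ∫ _ in Set.Ioo (-Real.pi) Real.pi, (1 : ℝ) = 2 * Real.pi := by
    simp only [MeasureTheory.integral_const, MeasureTheory.Measure.restrict_apply
      MeasurableSet.univ, Set.univ_inter, Real.volume_Ioo, smul_eq_mul, mul_one]
    rw [measureReal_def, Measure.restrict_apply MeasurableSet.univ, Set.univ_inter,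
      Real.volume_Ioo, ENNReal.toReal_ofReal (by linarith)]
    ring
  rw [hIoo]
  field_simp

/-- For the normalized reproducing kernel `k_w` of the Bargmann–Fock space and any
measurable `Ω ⊆ ℂ` of finite Lebesgue measure,
`∫_Ω |k_w(z)|² dλ(z) = ∫_Ω e^{−π|z−w|²} dA(z) ≤ 1 − e^{−|Ω|}`. -/
theorem reproducing_kernel_concentration
    (w : ℂ) (Ω : Set ℂ) (hmeas : MeasurableSet Ω) (hfin : volume Ω ≠ ⊤) :
    ∫ z in Ω, Real.exp (-Real.pi * ‖z - w‖ ^ 2)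
      ≤ 1 - Real.exp (-(volume Ω).toReal) := by
  have hπ : (0 : ℝ) < Real.pi := Real.pi_pos
  set s : ℝ := (volume Ω).toReal with hs_def
  have hs : 0 ≤ s := ENNReal.toReal_nonneg
  set r : ℝ := Real.sqrt (s / Real.pi) with hr_def
  have hr : 0 ≤ r := Real.sqrt_nonneg _
  have hr2 : Real.pi * r ^ 2 = s := by
    rw [hr_def, Real.sq_sqrt (by positivity)]
    field_simp
  set B : Set ℂ := Metric.ball w r with hB_def
  have hBmeas : MeasurableSet B := Metric.isOpen_ball.measurableSet
  have hvolB : volume B = volume Ω := by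
    rw [hB_def, Complex.volume_ball]
    rw [← ENNReal.ofReal_pow hr, ← ENNReal.ofReal_coe_nnreal, NNReal.coe_real_pi,
      ← ENNReal.ofReal_mul (by positivity)]
    rw [show r ^ 2 * Real.pi = s by rw [← hr2]; ring]
    exact ENNReal.ofReal_toReal hfin
  have hvolB_fin : volume B ≠ ⊤ := hvolB ▸ hfin
  set f : ℂ → ℝ := fun z => Real.exp (-Real.pi * ‖z - w‖ ^ 2) with hf_def
  have hfcont : Continuous f := by continuity
  have hfnonneg : ∀ z, 0 ≤ f z := fun z => Real.exp_nonneg _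
  have hfbd : ∀ z, ‖f z‖ ≤ 1 := by
    intro z
    rw [Real.norm_of_nonneg (hfnonneg z)]
    exact Real.exp_le_one_iff.mpr (by nlinarith [sq_nonneg ‖z - w‖, hπ])
  have hint : ∀ (t : Set ℂ), volume t ≠ ⊤ → IntegrableOn f t volume := by
    intro t ht
    exact Measure.integrableOn_of_bounded ht hfcont.aestronglyMeasurable
      (Filter.Eventually.of_forall hfbd)
  -- measures of the two difference sets agree
  have hfinΩB : volume (Ω ∩ B) ≠ ⊤ :=
    fun h => hfin (top_le_iff.mp (h ▸ measure_mono Set.inter_subset_left))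
  have hdiff_eq : volume (Ω \ B) = volume (B \ Ω) := by
    have h1 : volume (Ω \ B) + volume (Ω ∩ B) = volume Ω :=
      measure_diff_add_inter Ω hBmeas
    have h2 : volume (B \ Ω) + volume (B ∩ Ω) = volume B :=
      measure_diff_add_inter B hmeas
    rw [Set.inter_comm B Ω, hvolB] at h2
    have := h1.trans h2.symm
    exact WithTop.add_right_cancel hfinΩB this
  have hfinΩdB : volume (Ω \ B) ≠ ⊤ :=
    fun h => hfin (top_le_iff.mp (h ▸ measure_mono Set.diff_subset))
  have hfinBdΩ : volume (B \ Ω) ≠ ⊤ :=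
    fun h => hvolB_fin (top_le_iff.mp (h ▸ measure_mono Set.diff_subset))
  -- bathtub principle
  have hsplitΩ : ∫ z in Ω, f z = (∫ z in Ω ∩ B, f z) + ∫ z in Ω \ B, f z :=
    (MeasureTheory.integral_inter_add_diff hBmeas (hint Ω hfin)).symm
  have hsplitB : ∫ z in B, f z = (∫ z in Ω ∩ B, f z) + ∫ z in B \ Ω, f z := by
    have := (MeasureTheory.integral_inter_add_diff hmeas (hint B hvolB_fin)).symm
    rwa [Set.inter_comm B Ω] at this
  have hupper : ∫ z in Ω \ B, f z
      ≤ Real.exp (-Real.pi * r ^ 2) * (volume (Ω \ B)).toReal := by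
    have hb : ∀ z ∈ Ω \ B, ‖f z‖ ≤ Real.exp (-Real.pi * r ^ 2) := by
      intro z hz
      rw [Real.norm_of_nonneg (hfnonneg z)]
      apply Real.exp_le_exp.mpr
      have hzB : r ≤ ‖z - w‖ := by
        have := hz.2
        simp only [hB_def, Metric.mem_ball, dist_eq_norm, not_lt] at this
        exact this
      have h2 : r ^ 2 ≤ ‖z - w‖ ^ 2 := pow_le_pow_left₀ hr hzB 2
      nlinarith [mul_le_mul_of_nonneg_left h2 hπ.le]
    calc ∫ z in Ω \ B, f z ≤ ‖∫ z in Ω \ B, f z‖ := le_abs_self _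
      _ ≤ Real.exp (-Real.pi * r ^ 2) * (volume (Ω \ B)).toReal :=
        by have := norm_setIntegral_le_of_norm_le_const hfinΩdB.lt_top hb
           rwa [measureReal_def] at this
  have hlower : Real.exp (-Real.pi * r ^ 2) * (volume (B \ Ω)).toReal
      ≤ ∫ z in B \ Ω, f z := by
    rw [← measureReal_def, mul_comm (Real.exp _), ← smul_eq_mul]
    apply MeasureTheory.setIntegral_ge_of_const_le (hBmeas.diff hmeas) hfinBdΩ
    · intro z hz
      apply Real.exp_le_exp.mpr
      have hzB : ‖z - w‖ < r := by
        have := hz.1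
        simpa [hB_def, Metric.mem_ball, dist_eq_norm] using this
      have h2 : ‖z - w‖ ^ 2 ≤ r ^ 2 := pow_le_pow_left₀ (norm_nonneg _) hzB.le 2
      nlinarith [mul_le_mul_of_nonneg_left h2 hπ.le]
    · exact hint _ hfinBdΩ
  have hBval : ∫ z in B, f z = 1 - Real.exp (-Real.pi * r ^ 2) :=
    gaussian_ball_integral w r hr
  have key : ∫ z in Ω, f z ≤ ∫ z in B, f z := by
    rw [hsplitΩ, hsplitB]
    have : Real.exp (-Real.pi * r ^ 2) * (volume (Ω \ B)).toReal
        = Real.exp (-Real.pi * r ^ 2) * (volume (B \ Ω)).toReal := by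
      rw [hdiff_eq]
    linarith [hupper, hlower]
  calc ∫ z in Ω, f z ≤ ∫ z in B, f z := key
    _ = 1 - Real.exp (-Real.pi * r ^ 2) := hBval
    _ = 1 - Real.exp (-s) := by rw [← hr2]; ring_nf
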